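/- Let a group G act by uniform isomorphisms on metric spaces X and Y, and let i : X → Y be a uniformly continuous equivariant map with dense image. If the G-space X has the concentration property, then so does Y. -/
import Mathlib


open Metric Pointwise

/-- A subset `A` of a metric `G`-space `X` is essential if for every `ε > 0` and every
finite collection of group elements, the translates of the `ε`-neighbourhood of `A`
have a common point. -/
def Essential (G : Type*) {X : Type*} [Group G] [PseudoMetricSpace X] [MulAction G X]
    (A : Set X) : Prop :=
  ∀ ε > (0 : ℝ), ∀ T : Finset G, (⋂ g ∈ T, g • thickening ε A).Nonempty

/-- A metric `G`-space has the concentration property if every finite cover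
contains an essential set. -/
def ConcProp (G : Type*) (X : Type*) [Group G] [PseudoMetricSpace X] [MulAction G X] :
    Prop :=
  ∀ C : Finset (Set X), ⋃₀ (C : Set (Set X)) = Set.univ → ∃ A ∈ C, Essential G A

/-- If `G` acts by uniform isomorphisms on metric spaces `X` and `Y`, and
`i : X → Y` is a uniformly continuous equivariant map with dense image, then the
concentration property passes from `X` to `Y`. -/
theorem concProp_of_image {G X Y : Type*} [Group G] [MetricSpace X] [MetricSpace Y]
    [MulAction G X] [MulAction G Y]
    (hX : ∀ g : G, UniformContinuous (fun x : X => g • x))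
    (hY : ∀ g : G, UniformContinuous (fun y : Y => g • y))
    (i : X → Y) (hi : UniformContinuous i)
    (hequiv : ∀ (g : G) (x : X), i (g • x) = g • i x)
    (hdense : DenseRange i)
    (hconc : ConcProp G X) : ConcProp G Y := by
  classical
  intro C hC
  -- pull back the cover
  obtain ⟨A', hA', hess⟩ := hconc (C.image (fun A => i ⁻¹' A)) (by
    ext x
    simp only [Set.mem_sUnion, Finset.coe_image, Set.mem_image, Set.mem_univ, iff_true,
      Finset.mem_coe, Finset.mem_image]
    have : i x ∈ ⋃₀ (C : Set (Set Y)) := by rw [hC]; trivial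
    obtain ⟨A, hA, hxA⟩ := this
    exact ⟨i ⁻¹' A, ⟨A, hA, rfl⟩, hxA⟩)
  obtain ⟨A, hA, rfl⟩ := Finset.mem_image.mp hA'
  refine ⟨A, hA, ?_⟩
  intro ε hε T
  obtain ⟨δ, hδ, hδε⟩ := Metric.uniformContinuous_iff.mp hi ε hε
  obtain ⟨x, hx⟩ := hess δ hδ T
  refine ⟨i x, ?_⟩
  simp only [Set.mem_iInter] at hx ⊢
  intro g hg
  obtain ⟨z, hz, rfl⟩ := hx g hg
  obtain ⟨y, hyA, hzy⟩ := Metric.mem_thickening_iff.mp hz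
  rw [hequiv]
  exact ⟨i z, Metric.mem_thickening_iff.mpr ⟨i y, hyA, hδε hzy⟩, rfl⟩
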